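/- Let {g_b}_{b∈B} be a finite family of real symmetric matrices indexed by a finite nonempty type, and let G = ∑_{b∈B} g_b. Then the largest eigenvalue of the stoquastic of the sum is bounded by the sum of the largest eigenvalues of the stoquastics of the terms: λ(G⁺) ≤ ∑_{b∈B} λ(g_b⁺). -/

import Mathlib

open Matrix Finset

/-- The largest eigenvalue of a Hermitian matrix. -/
noncomputable def maxEig {𝕜 : Type*} [RCLike 𝕜] {n : Type*} [Fintype n] [DecidableEq n]
    {A : Matrix n n 𝕜} (hA : A.IsHermitian) : ℝ := ⨆ i, hA.eigenvalues i

/-- The stoquastic of a real matrix: keep the diagonal, take absolute values off-diagonal. -/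
def stoq {n : Type*} [DecidableEq n] (A : Matrix n n ℝ) : Matrix n n ℝ :=
  fun i j => if i = j then A i j else |A i j|

lemma stoq_isHermitian {n : Type*} [Fintype n] [DecidableEq n] {A : Matrix n n ℝ}
    (hA : A.IsHermitian) : (stoq A).IsHermitian := by
  ext i j
  by_cases h : i = j
  · subst h; simp [stoq, Matrix.conjTranspose_apply]
  · have := hA.apply i j
    simp only [Matrix.conjTranspose_apply, stoq, h, Ne.symm h, if_false, star_trivial] at *
    rw [this]

lemma isHermitian_sum {𝕜 : Type*} [RCLike 𝕜] {n B : Type*} [Fintype n] [Fintype B]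
    (g : B → Matrix n n 𝕜) (hg : ∀ b, (g b).IsHermitian) : (∑ b, g b).IsHermitian := by
  unfold Matrix.IsHermitian
  rw [Matrix.conjTranspose_sum]
  exact Finset.sum_congr rfl fun b _ => (hg b).eq

lemma dot_mulVec_swap {n : Type*} [Fintype n] [DecidableEq n] (U : Matrix n n ℝ)
    (x z : n → ℝ) : x ⬝ᵥ (U *ᵥ z) = (Uᴴ *ᵥ x) ⬝ᵥ z := by
  rw [dotProduct_mulVec]
  congr 1
  have := Matrix.star_mulVec (M := Uᴴ) (v := x)
  simpa using this.symm

lemma rayleigh_le {n : Type*} [Fintype n] [DecidableEq n] {A : Matrix n n ℝ}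
    (hA : A.IsHermitian) (x : n → ℝ) :
    x ⬝ᵥ (A *ᵥ x) ≤ maxEig hA * (x ⬝ᵥ x) := by
  classical
  set U : Matrix n n ℝ := (hA.eigenvectorUnitary : Matrix n n ℝ) with hUdef
  have hUU : U * star U = 1 := (Matrix.mem_unitaryGroup_iff).mp hA.eigenvectorUnitary.2
  set y : n → ℝ := Uᴴ *ᵥ x with hy
  have hdiag : ∀ z : n → ℝ, x ⬝ᵥ (U *ᵥ z) = y ⬝ᵥ z := fun z => dot_mulVec_swap U x z
  have hxx : x ⬝ᵥ x = y ⬝ᵥ y := by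
    have h2 : x ⬝ᵥ x = x ⬝ᵥ (U *ᵥ (Uᴴ *ᵥ x)) := by
      rw [Matrix.mulVec_mulVec]
      have : U * Uᴴ = 1 := by rw [← Matrix.star_eq_conjTranspose]; exact hUU
      rw [this, Matrix.one_mulVec]
    rw [h2, hdiag]
  have hAx : x ⬝ᵥ (A *ᵥ x) = ∑ i, hA.eigenvalues i * (y i * y i) := by
    conv_lhs => rw [hA.spectral_theorem, Unitary.conjStarAlgAut_apply]
    rw [mul_assoc, ← Matrix.mulVec_mulVec, hdiag, ← Matrix.mulVec_mulVec,
      Matrix.star_eq_conjTranspose]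
    show y ⬝ᵥ _ *ᵥ y = _
    rw [dotProduct]
    refine Finset.sum_congr rfl fun i _ => ?_
    rw [Matrix.mulVec_diagonal]
    simp [mul_comm, mul_left_comm]
  have hbdd : BddAbove (Set.range hA.eigenvalues) := Set.Finite.bddAbove (Set.finite_range _)
  have hle : ∀ i, hA.eigenvalues i ≤ maxEig hA := fun i => le_ciSup hbdd i
  calc x ⬝ᵥ (A *ᵥ x) = ∑ i, hA.eigenvalues i * (y i * y i) := hAx
    _ ≤ ∑ i, maxEig hA * (y i * y i) := by
        exact Finset.sum_le_sum fun i _ => mul_le_mul_of_nonneg_right (hle i) (mul_self_nonneg _)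
    _ = maxEig hA * (y ⬝ᵥ y) := by rw [← Finset.mul_sum]; rfl
    _ = maxEig hA * (x ⬝ᵥ x) := by rw [hxx]

lemma exists_rayleigh_eq {n : Type*} [Fintype n] [DecidableEq n] [Nonempty n]
    {A : Matrix n n ℝ} (hA : A.IsHermitian) :
    ∃ x : n → ℝ, x ⬝ᵥ x = 1 ∧ x ⬝ᵥ (A *ᵥ x) = maxEig hA := by
  classical
  obtain ⟨i, hi⟩ := Finite.exists_max hA.eigenvalues
  have hmax : maxEig hA = hA.eigenvalues i :=
    le_antisymm (ciSup_le hi) (le_ciSup (Set.Finite.bddAbove (Set.finite_range _)) i)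
  set v : n → ℝ := ⇑(hA.eigenvectorBasis i) with hv
  have h1 : v ⬝ᵥ v = 1 := by
    have hn := hA.eigenvectorBasis.orthonormal.1 i
    have h2 : (inner ℝ (hA.eigenvectorBasis i) (hA.eigenvectorBasis i) : ℝ) = 1 := by
      rw [real_inner_self_eq_norm_sq, hn]; norm_num
    rw [PiLp.inner_apply] at h2
    simpa [dotProduct, hv, pow_two] using h2
  refine ⟨v, h1, ?_⟩
  rw [hv, hA.mulVec_eigenvectorBasis i, ← hv, dotProduct_smul, hmax]
  simp [h1]

lemma stoq_nonneg_off {n : Type*} [DecidableEq n] (A : Matrix n n ℝ) {i j : n} (h : i ≠ j) :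
    0 ≤ stoq A i j := by simp [stoq, h, abs_nonneg]

lemma aux_main {n B : Type*} [Fintype n] [DecidableEq n] [Nonempty n] [Fintype B]
    (g : B → Matrix n n ℝ) (hg : ∀ b, (g b).IsHermitian)
    (hG : (stoq (∑ b, g b)).IsHermitian) (hgb : ∀ b, (stoq (g b)).IsHermitian) :
    maxEig hG ≤ ∑ b, maxEig (hgb b) := by
  classical
  obtain ⟨x, hx1, hx2⟩ := exists_rayleigh_eq hG
  set y : n → ℝ := fun i => |x i| with hy
  have hy1 : y ⬝ᵥ y = 1 := by
    rw [← hx1]; exact Finset.sum_congr rfl fun i _ => abs_mul_abs_self (x i)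
  rw [← hx2]
  have step1 : x ⬝ᵥ (stoq (∑ b, g b) *ᵥ x) ≤ ∑ b, y ⬝ᵥ (stoq (g b) *ᵥ y) := by
    have hrhs : ∑ b, y ⬝ᵥ (stoq (g b) *ᵥ y) = ∑ i, ∑ j, y i * ((∑ b, stoq (g b) i j) * y j) := by
      have hone : ∀ b : B, y ⬝ᵥ (stoq (g b) *ᵥ y) = ∑ i, ∑ j, y i * (stoq (g b) i j * y j) := by
        intro b; simp [dotProduct, Matrix.mulVec, Finset.mul_sum]
      calc ∑ b, y ⬝ᵥ (stoq (g b) *ᵥ y)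
          = ∑ b, ∑ i, ∑ j, y i * (stoq (g b) i j * y j) :=
            Finset.sum_congr rfl fun b _ => hone b
        _ = ∑ i, ∑ b, ∑ j, y i * (stoq (g b) i j * y j) := Finset.sum_comm
        _ = ∑ i, ∑ j, ∑ b, y i * (stoq (g b) i j * y j) :=
            Finset.sum_congr rfl fun i _ => Finset.sum_comm
        _ = ∑ i, ∑ j, y i * ((∑ b, stoq (g b) i j) * y j) := by
            refine Finset.sum_congr rfl fun i _ => Finset.sum_congr rfl fun j _ => ?_
            rw [Finset.sum_mul, Finset.mul_sum]
    rw [hrhs]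
    have hlhs : x ⬝ᵥ (stoq (∑ b, g b) *ᵥ x) = ∑ i, ∑ j, x i * (stoq (∑ b, g b) i j * x j) := by
      simp [dotProduct, Matrix.mulVec, Finset.mul_sum]
    rw [hlhs]
    refine Finset.sum_le_sum fun i _ => Finset.sum_le_sum fun j _ => ?_
    by_cases h : i = j
    · subst h
      have hde : stoq (∑ b, g b) i i = ∑ b, stoq (g b) i i := by
        simp [stoq, Matrix.sum_apply]
      rw [hde]
      have hxy : x i * x i = y i * y i := (abs_mul_abs_self (x i)).symm
      exact le_of_eq (by linear_combination (∑ b, stoq (g b) i i) * hxy)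
    · have h1 : x i * (stoq (∑ b, g b) i j * x j) ≤ y i * (stoq (∑ b, g b) i j * y j) := by
        have hnn : 0 ≤ stoq (∑ b, g b) i j := stoq_nonneg_off _ h
        have : x i * x j ≤ y i * y j := by
          rw [hy]; calc x i * x j ≤ |x i * x j| := le_abs_self _
            _ = |x i| * |x j| := abs_mul _ _
        nlinarith
      have h2 : stoq (∑ b, g b) i j ≤ ∑ b, stoq (g b) i j := by
        simp only [stoq, h, if_false, Matrix.sum_apply]
        exact Finset.abs_sum_le_sum_abs _ _
      have hyi : 0 ≤ y i := abs_nonneg _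
      have hyj : 0 ≤ y j := abs_nonneg _
      refine h1.trans (mul_le_mul_of_nonneg_left (mul_le_mul_of_nonneg_right h2 hyj) hyi)
  refine step1.trans (Finset.sum_le_sum fun b _ => ?_)
  have := rayleigh_le (hgb b) y
  rwa [hy1, mul_one] at this

/-- **Subadditivity of the stoquastic largest eigenvalue.** For a finite family of real
symmetric matrices `g b` with sum `G`, the largest eigenvalue of the stoquastic of `G`
is at most the sum of the largest eigenvalues of the stoquastics of the terms. -/
theorem maxEig_stoq_sum_le {n B : Type*} [Fintype n] [DecidableEq n] [Nonempty n] [Fintype B]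
    (g : B → Matrix n n ℝ) (hg : ∀ b, (g b).IsHermitian) :
    maxEig (stoq_isHermitian (isHermitian_sum g hg)) ≤
      ∑ b, maxEig (stoq_isHermitian (hg b)) := by
  exact aux_main g hg _ _
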